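/- For every x ∈ M with d_0 x = 0 and g x = 0, one has Π x = ∑_{r=1}^{Q} g(∂_r x), and consequently Π_0(d(Π_E x)) = ∑_{r=1}^{Q} ∂_r x − g(d_0(∑_{r=1}^{Q} ∂_r x)) − d_0(g(∑_{r=1}^{Q} ∂_r x)). (Here ∂_r x = 0 for r > Q, since ∂_r raises the weight by r.) -/

import Mathlib

/-- For an `s`-multicomplex with weights between `0` and `Q`, total differential `d`,
partial inverse `g` of `d₀`, `b := g∘d₀ − g∘d`,
`Π := (∑_{j=0}^{Q} b^j) ∘ g ∘ d + d ∘ (∑_{j=0}^{Q} b^j) ∘ g`, `Π_E := id − Π`,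
`Π₀ := id − g∘d₀ − d₀∘g`, and `∂_r` defined recursively by `∂₁ := d₁` and
`∂_r := d_r − ∑_{j=1}^{r−1} d_{r−j} ∘ g ∘ ∂_j`: for every `x` with `d₀ x = 0` and
`g x = 0`, one has `Π x = ∑_{r=1}^{Q} g (∂_r x)`, and consequently
`Π₀(d(Π_E x)) = ∑_{r=1}^{Q} ∂_r x − g(d₀(∑_{r=1}^{Q} ∂_r x)) − d₀(g(∑_{r=1}^{Q} ∂_r x))`.
(Here `∂_r x = 0` for `r > Q`, since `∂_r` raises the weight by `r`.) -/
theorem pi_and_rumin_differential_on_harmonic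
    {R M : Type*} [CommRing R] [AddCommGroup M] [Module R M]
    (Mgr : ℤ × ℤ → Submodule R M)
    (hinternal : DirectSum.IsInternal Mgr)
    (s : ℕ) (D : ℕ → M →ₗ[R] M)
    (hDvan : ∀ i : ℕ, s ≤ i → D i = 0)
    (hDdeg : ∀ (i : ℕ) (a b : ℤ), ∀ x ∈ Mgr (a, b), D i x ∈ Mgr (a + (i : ℤ), b + 1 - (i : ℤ)))
    (hDD : ∀ n : ℕ, ∑ i ∈ Finset.range (n + 1), D i ∘ₗ D (n - i) = 0)
    (Q : ℕ) (hQ : ∀ a b : ℤ, a < 0 ∨ (Q : ℤ) < a → Mgr (a, b) = ⊥)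
    (d : M →ₗ[R] M) (hd : d = ∑ i ∈ Finset.range (s + 1), D i)
    (g : M →ₗ[R] M)
    (hgdeg : ∀ (a b : ℤ), ∀ x ∈ Mgr (a, b), g x ∈ Mgr (a, b - 1))
    (hgg : g ∘ₗ g = 0)
    (hgdg : g ∘ₗ D 0 ∘ₗ g = g)
    (hdgd : D 0 ∘ₗ g ∘ₗ D 0 = D 0)
    (b : M →ₗ[R] M) (hb : b = g ∘ₗ D 0 - g ∘ₗ d)
    (Pi : M →ₗ[R] M)
    (hPi : Pi = ((∑ j ∈ Finset.range (Q + 1), b ^ j) ∘ₗ g) ∘ₗ d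
        + (d ∘ₗ (∑ j ∈ Finset.range (Q + 1), b ^ j)) ∘ₗ g)
    (PiE : M →ₗ[R] M) (hPiE : PiE = LinearMap.id - Pi)
    (Pi0 : M →ₗ[R] M) (hPi0 : Pi0 = LinearMap.id - g ∘ₗ D 0 - D 0 ∘ₗ g)
    (P : ℕ → M →ₗ[R] M) (hP1 : P 1 = D 1)
    (hPrec : ∀ r : ℕ, 2 ≤ r → P r = D r - ∑ j ∈ Finset.Ico 1 r, D (r - j) ∘ₗ (g ∘ₗ P j))
    (x : M) (hx0 : D 0 x = 0) (hxg : g x = 0) :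
    (∀ r : ℕ, Q < r → P r x = 0) ∧
    Pi x = ∑ r ∈ Finset.Icc 1 Q, g (P r x) ∧
    Pi0 (d (PiE x)) = (∑ r ∈ Finset.Icc 1 Q, P r x)
        - g (D 0 (∑ r ∈ Finset.Icc 1 Q, P r x))
        - D 0 (g (∑ r ∈ Finset.Icc 1 Q, P r x)) := by

  classical
  set N := Q + s with hNdef
  -- D 0 ∘ D 0 = 0
  have hD0D0 : ∀ y : M, D 0 (D 0 y) = 0 := by
    intro y
    have := DFunLike.congr_fun (hDD 0) y
    simpa using this
  have hdgd' : ∀ y : M, D 0 (g (D 0 y)) = D 0 y := fun y => by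
    simpa using DFunLike.congr_fun hdgd y
  have htop : (⨆ p, Mgr p) = ⊤ := hinternal.submodule_iSup_eq_top
  -- degree lemma for P
  have hPdeg : ∀ r : ℕ, 1 ≤ r → ∀ (a bb : ℤ) (y : M), y ∈ Mgr (a, bb) →
      P r y ∈ Mgr (a + (r : ℤ), bb + 1 - (r : ℤ)) := by
    intro r
    induction r using Nat.strong_induction_on with
    | _ r ih =>
      intro hr a bb y hy
      rcases eq_or_lt_of_le hr with h1 | h2
      · rw [← h1, hP1]
        simpa using hDdeg 1 a bb y hy
      · rw [hPrec r h2]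
        simp only [LinearMap.sub_apply, LinearMap.coe_sum, Finset.sum_apply,
          LinearMap.comp_apply]
        refine Submodule.sub_mem _ (hDdeg r a bb y hy) (Submodule.sum_mem _ ?_)
        intro j hj
        rw [Finset.mem_Ico] at hj
        have hPj := ih j hj.2 hj.1 a bb y hy
        have hgj := hgdeg _ _ _ hPj
        have hD := hDdeg (r - j) _ _ _ hgj
        have hco : ((r - j : ℕ) : ℤ) = (r : ℤ) - j := by omega
        rw [hco] at hD
        have hpair : ((a + (j:ℤ)) + ((r:ℤ) - j), ((bb + 1 - (j:ℤ)) - 1) + 1 - ((r:ℤ) - j))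
            = (a + (r:ℤ), bb + 1 - (r:ℤ)) := by
          simp only [Prod.mk.injEq]
          constructor <;> ring
        rw [hpair] at hD
        exact hD
  -- vanishing lemma for P r with r > Q
  have hPzero : ∀ r : ℕ, Q < r → ∀ y : M, P r y = 0 := by
    intro r hr y
    have hy : y ∈ ⨆ p, Mgr p := htop ▸ Submodule.mem_top
    refine Submodule.iSup_induction Mgr (motive := fun z => P r z = 0) hy ?_ (map_zero _) ?_
    · rintro ⟨a, bb⟩ z hz
      by_cases ha : a < 0 ∨ (Q : ℤ) < a
      · rw [hQ a bb ha, Submodule.mem_bot] at hz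
        rw [hz, map_zero]
      · push_neg at ha
        have hmem := hPdeg r (by omega) a bb z hz
        have hbot : Mgr (a + (r : ℤ), bb + 1 - (r : ℤ)) = ⊥ := by
          refine hQ _ _ (Or.inr ?_)
          omega
        rw [hbot, Submodule.mem_bot] at hmem
        exact hmem
    · intro y z hy hz
      rw [map_add, hy, hz, add_zero]
  -- the filtration submodules
  set Nsub : ℤ → Submodule R M := fun c => ⨆ p : {p : ℤ × ℤ // c ≤ p.1}, Mgr p.val with hNsub
  have hmemN0 : ∀ y : M, y ∈ Nsub 0 := by
    intro y
    have : (⨆ p, Mgr p) ≤ Nsub 0 := by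
      refine iSup_le fun p => ?_
      by_cases hp : (0 : ℤ) ≤ p.1
      · exact le_iSup (fun q : {p : ℤ × ℤ // (0:ℤ) ≤ p.1} => Mgr q.val) ⟨p, hp⟩
      · rw [show p = (p.1, p.2) from rfl, hQ p.1 p.2 (Or.inl (by omega))]
        exact bot_le
    exact this (htop ▸ Submodule.mem_top)
  have hbmap : ∀ c : ℤ, ∀ y ∈ Nsub c, b y ∈ Nsub (c + 1) := by
    intro c y hy
    refine Submodule.iSup_induction _ (motive := fun z => b z ∈ Nsub (c + 1)) hy ?_ ?_ ?_
    · rintro ⟨⟨a, bb⟩, hca⟩ z hz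
      have hbz : b z = -∑ i ∈ Finset.range s, g (D (i + 1) z) := by
        rw [hb]
        simp only [LinearMap.sub_apply, LinearMap.comp_apply]
        rw [hd]
        simp only [LinearMap.coe_sum, Finset.sum_apply]
        rw [map_sum, Finset.sum_range_succ']
        abel
      rw [hbz]
      refine Submodule.neg_mem _ (Submodule.sum_mem _ ?_)
      intro i _
      have hmem := hgdeg _ _ _ (hDdeg (i + 1) a bb z hz)
      have hle : c + 1 ≤ a + ((i : ℤ) + 1) := by
        simp only at hca
        omega
      exact le_iSup (fun q : {p : ℤ × ℤ // c + 1 ≤ p.1} => Mgr q.val)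
        ⟨(a + ((i:ℕ)+1 : ℕ), bb + 1 - ((i:ℕ)+1 : ℕ) - 1), by push_cast; push_cast at hle; omega⟩
        (by push_cast; push_cast at hmem ⊢; convert hmem using 2 <;> ring)
    · simpa using Submodule.zero_mem (Nsub (c + 1))
    · intro y z hy hz
      rw [map_add]
      exact Submodule.add_mem _ hy hz
  have hbpow : ∀ y : M, (b ^ (Q + 1)) y = 0 := by
    have key : ∀ n : ℕ, ∀ y : M, (b ^ n) y ∈ Nsub (n : ℤ) := by
      intro n
      induction n with
      | zero => intro y; simpa using hmemN0 y
      | succ n ihn =>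
        intro y
        have : (b ^ (n + 1)) y = b ((b ^ n) y) := by
          rw [pow_succ']
          rfl
        rw [this]
        have h2 := hbmap (n : ℤ) _ (ihn y)
        have hc : ((n + 1 : ℕ) : ℤ) = (n : ℤ) + 1 := by push_cast; ring
        rw [hc]
        exact h2
    intro y
    have hmem := key (Q + 1) y
    have hbot : Nsub ((Q : ℤ) + 1) = ⊥ := by
      refine le_bot_iff.mp (iSup_le fun p => ?_)
      rw [show p.val = (p.val.1, p.val.2) from rfl, hQ p.val.1 p.val.2 (Or.inr (by
        have := p.property
        omega))]
    rw [show ((Q + 1 : ℕ) : ℤ) = (Q : ℤ) + 1 by push_cast; ring, hbot, Submodule.mem_bot] at hmem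
    exact hmem
  -- the main sums
  set u : M := ∑ r ∈ Finset.Icc 1 N, g (P r x) with hu
  set S : M := ∑ r ∈ Finset.Icc 1 N, P r x with hS
  have hgS : g S = u := by rw [hS, map_sum]
  have hPrx : ∀ r ∈ Finset.Icc 1 N, P r x = D r x - ∑ j ∈ Finset.Ico 1 r, D (r - j) (g (P j x)) := by
    intro r hr
    rw [Finset.mem_Icc] at hr
    rcases eq_or_lt_of_le hr.1 with h1 | h2
    · rw [← h1, hP1]
      simp
    · rw [hPrec r h2]
      simp [LinearMap.sub_apply, LinearMap.coe_sum, Finset.sum_apply, LinearMap.comp_apply]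
  have hdx : ∑ r ∈ Finset.Icc 1 N, D r x = d x := by
    have h1 : d x = ∑ r ∈ Finset.range (N + 1), D r x := by
      rw [hd]
      simp only [LinearMap.coe_sum, Finset.sum_apply]
      refine Finset.sum_subset (Finset.range_subset_range.mpr (by omega)) ?_
      intro r _ hr
      rw [Finset.mem_range, not_lt] at hr
      rw [hDvan r (by omega)]
      rfl
    rw [h1, Finset.sum_range_succ', hx0, add_zero]
    rw [show Finset.Icc 1 N = Finset.Ico 1 (N + 1) from (Finset.Ico_add_one_right_eq_Icc _ _).symm,
      Finset.sum_Ico_eq_sum_range]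
    rw [show N + 1 - 1 = N by omega]
    exact Finset.sum_congr rfl fun i _ => by rw [Nat.add_comm 1 i]
  have hdmD0 : ∀ y : M, d y - D 0 y = ∑ k ∈ Finset.Icc 1 s, D k y := by
    intro y
    rw [hd]
    simp only [LinearMap.coe_sum, Finset.sum_apply]
    rw [Finset.sum_range_succ']
    rw [show Finset.Icc 1 s = Finset.Ico 1 (s + 1) from (Finset.Ico_add_one_right_eq_Icc _ _).symm,
      Finset.sum_Ico_eq_sum_range]
    rw [show s + 1 - 1 = s by omega]
    rw [Finset.sum_congr rfl (fun i _ => by rw [Nat.add_comm 1 i] : ∀ i ∈ Finset.range s, D (1 + i) y = D (i + 1) y)]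
    abel
  -- the double sum reindexing
  have hT : ∑ r ∈ Finset.Icc 1 N, ∑ j ∈ Finset.Ico 1 r, D (r - j) (g (P j x))
      = ∑ j ∈ Finset.Icc 1 N, ∑ k ∈ Finset.Icc 1 s, D k (g (P j x)) := by
    have step1 : ∀ r ∈ Finset.Icc 1 N, ∑ j ∈ Finset.Ico 1 r, D (r - j) (g (P j x))
        = ∑ j ∈ Finset.Icc 1 N, if j < r then D (r - j) (g (P j x)) else 0 := by
      intro r hr
      rw [Finset.mem_Icc] at hr
      rw [← Finset.sum_filter]
      refine Finset.sum_congr ?_ (fun _ _ => rfl)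
      ext j
      simp only [Finset.mem_filter, Finset.mem_Icc, Finset.mem_Ico]
      omega
    rw [Finset.sum_congr rfl step1, Finset.sum_comm]
    refine Finset.sum_congr rfl ?_
    intro j hj
    rw [Finset.mem_Icc] at hj
    rw [← Finset.sum_filter]
    have hfilt : (Finset.Icc 1 N).filter (fun r => j < r) = Finset.Icc (j + 1) N := by
      ext r
      simp only [Finset.mem_filter, Finset.mem_Icc]
      omega
    rw [hfilt]
    -- shift index
    have hshift : ∑ r ∈ Finset.Icc (j + 1) N, D (r - j) (g (P j x))
        = ∑ k ∈ Finset.Icc 1 (N - j), D k (g (P j x)) := by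
      rw [show Finset.Icc (j+1) N = Finset.Ico (j+1) (N+1) from (Finset.Ico_add_one_right_eq_Icc _ _).symm,
          show Finset.Icc 1 (N-j) = Finset.Ico 1 (N-j+1) from (Finset.Ico_add_one_right_eq_Icc _ _).symm,
          Finset.sum_Ico_eq_sum_range, Finset.sum_Ico_eq_sum_range]
      rw [show N + 1 - (j + 1) = N - j + 1 - 1 by omega]
      exact Finset.sum_congr rfl fun i _ => by rw [show j + 1 + i - j = 1 + i by omega]
    rw [hshift]
    by_cases hjQ : Q < j
    · simp [hPzero j hjQ x]
    · symm
      have hsle : s ≤ N - j := by omega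
      refine Finset.sum_subset (Finset.Icc_subset_Icc le_rfl hsle) ?_
      intro k hk hk2
      rw [Finset.mem_Icc] at hk
      rw [Finset.mem_Icc, not_and_or] at hk2
      have hks : s ≤ k := by omega
      rw [hDvan k hks]
      rfl
  -- key identity for S
  have hS2 : S = d x - (d u - D 0 u) := by
    have h1 : S = ∑ r ∈ Finset.Icc 1 N, D r x
        - ∑ r ∈ Finset.Icc 1 N, ∑ j ∈ Finset.Ico 1 r, D (r - j) (g (P j x)) := by
      rw [hS, Finset.sum_congr rfl hPrx, Finset.sum_sub_distrib]
    rw [h1, hdx, hT]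
    congr 1
    rw [hdmD0 u, Finset.sum_comm]
    refine Finset.sum_congr rfl fun k _ => ?_
    rw [hu, map_sum]
  -- fixed point equation for u
  have hufix : u = g (d x) + b u := by
    have hbu : b u = g (D 0 u) - g (d u) := by
      rw [hb]; simp only [LinearMap.sub_apply, LinearMap.comp_apply]
    have hthis : u = g (d x) - (g (d u) - g (D 0 u)) := by
      have h := congrArg (⇑g) hS2
      simp only [map_sub] at h
      rw [hgS] at h
      exact h
    rw [hbu]
    conv_lhs => rw [hthis]
    abel
  have hgdxu : g (d x) = u - b u := eq_sub_of_add_eq hufix.symm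
  -- Pi x = u
  have hgeom : ∀ n : ℕ, (∑ j ∈ Finset.range n, b ^ j) (g (d x)) = u - (b ^ n) u := by
    intro n
    induction n with
    | zero => simp
    | succ n ihn =>
      rw [Finset.sum_range_succ]
      simp only [LinearMap.add_apply] at ihn ⊢
      rw [ihn, hgdxu, map_sub]
      have : (b ^ (n + 1)) u = (b ^ n) (b u) := by rw [pow_succ]; rfl
      rw [this]
      abel
  have hPix : Pi x = u := by
    rw [hPi]
    simp only [LinearMap.add_apply, LinearMap.comp_apply]
    rw [hxg, map_zero, map_zero, add_zero, hgeom (Q + 1), hbpow u, sub_zero]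
  -- relating Icc 1 Q sums to Icc 1 N sums
  have hSQ : ∑ r ∈ Finset.Icc 1 Q, P r x = S := by
    rw [hS]
    refine Finset.sum_subset (Finset.Icc_subset_Icc le_rfl (by omega)) ?_
    intro r hr hr2
    rw [Finset.mem_Icc] at hr
    rw [Finset.mem_Icc, not_and_or] at hr2
    exact hPzero r (by omega) x
  have huQ : ∑ r ∈ Finset.Icc 1 Q, g (P r x) = u := by
    rw [hu]
    refine Finset.sum_subset (Finset.Icc_subset_Icc le_rfl (by omega)) ?_
    intro r hr hr2
    rw [Finset.mem_Icc] at hr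
    rw [Finset.mem_Icc, not_and_or] at hr2
    rw [hPzero r (by omega) x, map_zero]
  refine ⟨fun r hr => hPzero r hr x, by rw [hPix, huQ], ?_⟩
  -- third part
  have hdPiE : d (PiE x) = S - D 0 u := by
    rw [hPiE]
    simp only [LinearMap.sub_apply, LinearMap.id_apply]
    rw [map_sub, hPix, hS2]
    abel
  have hPi0ap : ∀ y : M, Pi0 y = y - g (D 0 y) - D 0 (g y) := by
    intro y
    rw [hPi0]
    simp [LinearMap.sub_apply, LinearMap.comp_apply]
  rw [hdPiE, map_sub, hPi0ap, hPi0ap]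
  rw [hD0D0 u, map_zero, hdgd' u]
  rw [hSQ, hgS]
  abel
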